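/- For F holomorphic on the unit disc, continuous on its closure, with F(0) = 0, and 0 ≤ r < s < 1, |z| = r, the derivative satisfies F'(z)·s·(1 − |z|²/s²) = ∫_𝕋 ξ̄·[F(s·φ_{z/s}(ξ)) − F(z)] dm(ξ), where φ_w(ζ) = (ζ + w)/(1 + w̄ζ) is the Möbius transformation and m is normalized Lebesgue measure on 𝕋. -/

import Mathlib

open Complex intervalIntegral Metric

private lemma mobius_abs_le {w ξ : ℂ} (hw : ‖w‖ < 1) (hξ : ‖ξ‖ ≤ 1) :
    ‖ξ + w‖ ≤ ‖1 + (starRingEnd ℂ) w * ξ‖ := by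
  have hw2 : Complex.normSq w < 1 := by
    rw [Complex.normSq_eq_norm_sq]; nlinarith [norm_nonneg w]
  have hξ2 : Complex.normSq ξ ≤ 1 := by
    rw [Complex.normSq_eq_norm_sq]; nlinarith [norm_nonneg ξ]
  have h : Complex.normSq (ξ + w) ≤ Complex.normSq (1 + (starRingEnd ℂ) w * ξ) := by
    simp only [Complex.normSq_apply, Complex.add_re, Complex.add_im, Complex.mul_re,
      Complex.mul_im, Complex.conj_re, Complex.conj_im, Complex.one_re, Complex.one_im] at *
    nlinarith
  rw [Complex.norm_def, Complex.norm_def]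
  exact Real.sqrt_le_sqrt h

theorem deriv_mobius_average_formula
    (F : ℂ → ℂ)
    (hF : DifferentiableOn ℂ F (Metric.ball (0 : ℂ) 1))
    (hFc : ContinuousOn F (Metric.closedBall (0 : ℂ) 1))
    (hF0 : F 0 = 0)
    (r s : ℝ) (hr : 0 ≤ r) (hrs : r < s) (hs : s < 1) :
    ∀ z : ℂ, ‖z‖ = r →
      deriv F z * (s : ℂ) * (1 - ((‖z‖ : ℂ) ^ 2) / (s : ℂ) ^ 2) =
        (1 / (2 * Real.pi)) •
          ∫ θ in (0 : ℝ)..(2 * Real.pi),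
            Complex.exp (-(θ * Complex.I)) *
              (F ((s : ℂ) *
                  ((Complex.exp (θ * Complex.I) + z / (s : ℂ)) /
                    (1 + (starRingEnd ℂ) (z / (s : ℂ)) * Complex.exp (θ * Complex.I)))) -
                F z) := by
  intro z hz
  have hs0 : (0:ℝ) < s := lt_of_le_of_lt hr hrs
  have hsC : (s:ℂ) ≠ 0 := by exact_mod_cast hs0.ne'
  set w : ℂ := z / s with hw_def
  have hwlt : ‖w‖ < 1 := by
    rw [hw_def, norm_div, hz]
    simp only [Complex.norm_real, Real.norm_eq_abs, abs_of_pos hs0]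
    rw [div_lt_one hs0]; exact hrs
  set g : ℂ → ℂ := fun ξ => (s:ℂ) * ((ξ + w) / (1 + (starRingEnd ℂ) w * ξ)) with hg_def
  -- denominator nonzero
  have hden : ∀ ξ : ℂ, ‖ξ‖ ≤ 1 → (1 + (starRingEnd ℂ) w * ξ) ≠ 0 := by
    intro ξ hξ h
    have : ‖(starRingEnd ℂ) w * ξ‖ < 1 := by
      rw [norm_mul, RCLike.norm_conj]
      calc ‖w‖ * ‖ξ‖ ≤ ‖w‖ * 1 := by
            exact mul_le_mul_of_nonneg_left hξ (norm_nonneg _)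
        _ < 1 := by simpa using hwlt
    have h1 : (starRingEnd ℂ) w * ξ = -1 := by linear_combination h
    rw [h1] at this; simp at this
  -- g maps the closed ball into closedBall 0 s
  have hmap : ∀ ξ : ℂ, ‖ξ‖ ≤ 1 → ‖g ξ‖ ≤ s := by
    intro ξ hξ
    rw [hg_def]
    simp only [norm_mul, norm_div]
    rw [Complex.norm_real, Real.norm_eq_abs, abs_of_pos hs0]
    have hd : ‖1 + (starRingEnd ℂ) w * ξ‖ ≠ 0 := norm_ne_zero_iff.2 (hden ξ hξ)
    have := mobius_abs_le hwlt hξ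
    calc s * (‖ξ + w‖ / ‖1 + (starRingEnd ℂ) w * ξ‖) ≤ s * 1 := by
          apply mul_le_mul_of_nonneg_left _ hs0.le
          rw [div_le_one (lt_of_le_of_ne (norm_nonneg _) (Ne.symm hd))]
          exact this
      _ = s := mul_one s
  -- G
  set G : ℂ → ℂ := fun ξ => F (g ξ) with hG_def
  have hgdiff : ∀ ξ : ℂ, ‖ξ‖ ≤ 1 → DifferentiableAt ℂ g ξ := by
    intro ξ hξ
    apply DifferentiableAt.const_mul
    exact (differentiableAt_id.add_const w).div
      ((differentiableAt_const _).add ((differentiableAt_const _).mul differentiableAt_id))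
      (hden ξ hξ)
  have hGdc : DiffContOnCl ℂ G (ball (0:ℂ) 1) := by
    constructor
    · intro ξ hξ
      have hξ1 : ‖ξ‖ ≤ 1 := le_of_lt (by simpa using hξ)
      have hFat : DifferentiableAt ℂ F (g ξ) := by
        apply hF.differentiableAt (isOpen_ball.mem_nhds _)
        simp only [mem_ball, dist_zero_right]
        exact lt_of_le_of_lt (hmap ξ hξ1) hs
      exact (hFat.comp ξ (hgdiff ξ hξ1)).differentiableWithinAt
    · rw [closure_ball (0:ℂ) one_ne_zero]
      apply hFc.comp
      · apply ContinuousOn.mul continuousOn_const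
        apply ContinuousOn.div
        · fun_prop
        · fun_prop
        · intro ξ hξ
          exact hden ξ (by simpa [dist_zero_right] using hξ)
      · intro ξ hξ
        simp only [mem_closedBall, dist_zero_right] at hξ ⊢
        exact le_trans (hmap ξ hξ) hs.le
  have hcontG : ContinuousOn G (closedBall (0:ℂ) 1) := by
    have := hGdc.continuousOn
    rwa [closure_ball (0:ℂ) one_ne_zero] at this
  -- Cauchy formula for deriv
  have hcauchy : deriv G 0 = (2 * Real.pi * Complex.I : ℂ)⁻¹ •
      circleIntegral (fun z => (z - 0) ^ (-2:ℤ) • G z) 0 1 := by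
    have h := hGdc.deriv_eq_smul_circleIntegral one_pos
    have e : (fun z : ℂ => (z - 0) ^ (-2:ℤ) • G z) = fun z => (1 / (z - 0) ^ 2) • G z := by
      funext z; rw [zpow_neg, zpow_ofNat, one_div]
    rw [e, h, smul_smul, inv_mul_cancel₀ (by simp [Real.pi_ne_zero, Complex.I_ne_zero]), one_smul]
  -- deriv G 0 via chain rule
  have hzball : z ∈ ball (0:ℂ) 1 := by
    simp only [mem_ball, dist_zero_right, hz]; linarith
  have hFz : DifferentiableAt ℂ F z := hF.differentiableAt (isOpen_ball.mem_nhds hzball)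
  have hg0 : g 0 = z := by
    rw [hg_def]; simp [hw_def]; field_simp
  have h1 : HasDerivAt (fun ξ : ℂ => ξ + w) 1 0 := (hasDerivAt_id 0).add_const w
  have h2 : HasDerivAt (fun ξ : ℂ => 1 + (starRingEnd ℂ) w * ξ) ((starRingEnd ℂ) w) 0 := by
    simpa using (((hasDerivAt_id (0:ℂ)).const_mul ((starRingEnd ℂ) w)).const_add 1)
  have hdiv := (h1.div h2 (by simp)).const_mul ((s:ℂ))
  have hG : HasDerivAt G (deriv F z *
      ((s:ℂ) * ((1 * (1 + (starRingEnd ℂ) w * 0) - (0 + w) * (starRingEnd ℂ) w) /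
        (1 + (starRingEnd ℂ) w * 0) ^ 2))) 0 := by
    have hFd : HasDerivAt F (deriv F z) (g 0) := by rw [hg0]; exact hFz.hasDerivAt
    exact hFd.comp 0 hdiv
  have hderivG : deriv G 0 = deriv F z * ((s:ℂ) * (1 - w * (starRingEnd ℂ) w)) := by
    rw [hG.deriv]; ring
  -- LHS equals deriv G 0
  have hnorm : ((‖z‖:ℂ))^2 = z * (starRingEnd ℂ) z := by
    rw [Complex.mul_conj]
    norm_cast
    rw [Complex.sq_norm]
  have hLHS : deriv F z * (s : ℂ) * (1 - ((‖z‖ : ℂ) ^ 2) / (s : ℂ) ^ 2) = deriv G 0 := by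
    rw [hderivG, hnorm, hw_def, map_div₀]
    simp only [Complex.conj_ofReal]
    field_simp
  -- unfold the circle integral
  rw [hLHS, hcauchy]
  rw [circleIntegral]
  have hinteq : ∀ θ : ℝ, deriv (circleMap 0 1) θ •
      ((circleMap 0 1 θ - 0) ^ (-2:ℤ) • G (circleMap 0 1 θ)) =
      Complex.I * (Complex.exp (-(θ * Complex.I)) * G (Complex.exp (θ * Complex.I))) := by
    intro θ
    rw [deriv_circleMap]
    simp only [circleMap_zero, smul_eq_mul, sub_zero, Complex.ofReal_one, one_mul]
    rw [zpow_neg, zpow_two, Complex.exp_neg]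
    have he : Complex.exp (θ * Complex.I) ≠ 0 := Complex.exp_ne_zero _
    field_simp
  simp only [hinteq]
  rw [intervalIntegral.integral_const_mul]
  -- integral of exp(-θ I) is zero
  have hexp_int : (∫ θ in (0:ℝ)..(2 * Real.pi), Complex.exp (-(θ * Complex.I))) = 0 := by
    have : ∀ θ : ℝ, Complex.exp (-(θ * Complex.I)) = Complex.exp ((-Complex.I) * θ) := by
      intro θ; ring_nf
    simp only [this]
    rw [integral_exp_mul_complex (by simp : (-Complex.I) ≠ 0)]
    push_cast
    rw [show (-Complex.I * (2 * (Real.pi:ℂ))) = -(2 * Real.pi * Complex.I) by ring,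
      Complex.exp_neg, Complex.exp_two_pi_mul_I]
    simp
  -- continuity / integrability
  have hcexp : Continuous (fun θ : ℝ => Complex.exp (θ * Complex.I)) := by fun_prop
  have hcG : Continuous (fun θ : ℝ => G (Complex.exp (θ * Complex.I))) := by
    apply hcontG.comp_continuous hcexp
    intro θ
    simp [Complex.norm_exp]
  have hi1 : IntervalIntegrable (fun θ : ℝ => Complex.exp (-(θ * Complex.I)) *
      G (Complex.exp (θ * Complex.I))) MeasureTheory.volume 0 (2 * Real.pi) :=
    (Continuous.mul (by fun_prop) hcG).intervalIntegrable _ _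
  have hi2 : IntervalIntegrable (fun θ : ℝ => Complex.exp (-(θ * Complex.I)) * F z)
      MeasureTheory.volume 0 (2 * Real.pi) :=
    Continuous.intervalIntegrable (by fun_prop) _ _
  have hsplit : (∫ θ in (0:ℝ)..(2 * Real.pi),
      Complex.exp (-(θ * Complex.I)) * (G (Complex.exp (θ * Complex.I)) - F z)) =
      ∫ θ in (0:ℝ)..(2 * Real.pi),
      Complex.exp (-(θ * Complex.I)) * G (Complex.exp (θ * Complex.I)) := by
    have : (fun θ : ℝ => Complex.exp (-(θ * Complex.I)) * (G (Complex.exp (θ * Complex.I)) - F z))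
        = fun θ : ℝ => Complex.exp (-(θ * Complex.I)) * G (Complex.exp (θ * Complex.I)) -
          Complex.exp (-(θ * Complex.I)) * F z := by
      funext θ; ring
    rw [this, intervalIntegral.integral_sub hi1 hi2, intervalIntegral.integral_mul_const,
      hexp_int]
    simp
  have hGshape : ∀ θ : ℝ, G (Complex.exp (θ * Complex.I)) =
      F ((s : ℂ) * ((Complex.exp (θ * Complex.I) + z / (s : ℂ)) /
        (1 + (starRingEnd ℂ) (z / (s : ℂ)) * Complex.exp (θ * Complex.I)))) := by
    intro θ; rfl
  simp only [← hw_def] at hGshape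
  simp only [← hGshape]
  rw [hsplit]
  rw [Complex.real_smul]
  push_cast
  rw [smul_eq_mul]
  have hpi : (Real.pi : ℂ) ≠ 0 := by exact_mod_cast Real.pi_ne_zero
  field_simp
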